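/- Fix a > 0 and real numbers c, w. Then as t ↓ 0, the integral from 0 to a of (2y/√(2πt³))·exp(−(y+wt)²/(2t) − cy) dy equals 2/√(2πt) − (w + c) + o(1); that is, the difference between this integral and 2/√(2πt) converges to −(w+c) as t → 0⁺. -/

import Mathlib

open Real MeasureTheory Filter Topology

noncomputable def Faux (x : ℝ) : ℝ := ∫ u in (0:ℝ)..x, Real.exp (-u ^ 2 / 2)

lemma cont_gauss : Continuous fun u : ℝ => Real.exp (-u ^ 2 / 2) := by continuity

lemma Faux_continuous : Continuous Faux :=
  intervalIntegral.continuous_primitive (fun a b => cont_gauss.intervalIntegrable a b) 0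

lemma Faux_zero : Faux 0 = 0 := intervalIntegral.integral_same

lemma Faux_atTop : Tendsto Faux atTop (𝓝 (Real.sqrt (2 * π) / 2)) := by
  have hint : MeasureTheory.IntegrableOn (fun u : ℝ => Real.exp (-u ^ 2 / 2)) (Set.Ioi 0) := by
    have h : (fun u : ℝ => Real.exp (-u ^ 2 / 2)) = fun u : ℝ => Real.exp (-(1/2 : ℝ) * u ^ 2) := by
      funext u; ring_nf
    rw [h]
    exact (integrable_exp_neg_mul_sq (by norm_num : (0:ℝ) < 1/2)).integrableOn
  have h := MeasureTheory.intervalIntegral_tendsto_integral_Ioi (0:ℝ) hint tendsto_id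
  have hv : ∫ u in Set.Ioi (0:ℝ), Real.exp (-u ^ 2 / 2) = Real.sqrt (2*π)/2 := by
    have h1 : ∀ u : ℝ, Real.exp (-u ^ 2 / 2) = Real.exp (-(1/2:ℝ) * u ^ 2) := fun u => by ring_nf
    simp_rw [h1]
    rw [integral_gaussian_Ioi, show π / (1/2 : ℝ) = 2 * π by ring]
  rw [hv] at h
  exact h

lemma exp_neg_le_aux {x : ℝ} (hx : 0 < x) : Real.exp (-x) ≤ 4 / x ^ 2 := by
  have hmul : Real.exp (x/2) * Real.exp (x/2) = Real.exp x := by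
    rw [← Real.exp_add]; ring_nf
  have h1 : x/2 + 1 ≤ Real.exp (x/2) := Real.add_one_le_exp (x/2)
  have h2 : x ^ 2 / 4 ≤ Real.exp x := by nlinarith [hx.le]
  rw [Real.exp_neg, inv_eq_one_div,
    div_le_div_iff₀ (Real.exp_pos x) (by positivity : (0:ℝ) < x ^ 2)]
  nlinarith

lemma sub1 (a m t : ℝ) (ht : 0 < t) :
    (∫ y in (0:ℝ)..a, Real.exp (-(y + m) ^ 2 / (2 * t)))
      = Real.sqrt t * (Faux ((a + m) / Real.sqrt t) - Faux (m / Real.sqrt t)) := by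
  have hst : (0:ℝ) < Real.sqrt t := Real.sqrt_pos.mpr ht
  have h1 : (∫ y in (0:ℝ)..a, Real.exp (-(y + m) ^ 2 / (2 * t)))
      = ∫ z in (0 + m)..(a + m), Real.exp (-z ^ 2 / (2 * t)) :=
    intervalIntegral.integral_comp_add_right (fun z => Real.exp (-z ^ 2 / (2 * t))) m
  have h2 : ∀ z : ℝ, Real.exp (-z ^ 2 / (2 * t)) = Real.exp (-(z / Real.sqrt t) ^ 2 / 2) := by
    intro z
    congr 1
    rw [div_pow, Real.sq_sqrt ht.le]
    ring
  rw [h1, zero_add]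
  simp_rw [h2]
  rw [intervalIntegral.integral_comp_div (f := fun u => Real.exp (-u ^ 2 / 2)) hst.ne']
  have hI : ∀ p q : ℝ, IntervalIntegrable (fun u : ℝ => Real.exp (-u ^ 2 / 2)) volume p q :=
    fun p q => cont_gauss.intervalIntegrable p q
  have h3 := intervalIntegral.integral_add_adjacent_intervals
    (hI 0 (m / Real.sqrt t)) (hI (m / Real.sqrt t) ((a + m) / Real.sqrt t))
  have h4 : (∫ u in (m / Real.sqrt t)..((a + m) / Real.sqrt t), Real.exp (-u ^ 2 / 2))
      = Faux ((a + m) / Real.sqrt t) - Faux (m / Real.sqrt t) := by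
    unfold Faux; linarith
  rw [smul_eq_mul, h4]

lemma sub2 (a m t : ℝ) (ht : 0 < t) :
    (∫ y in (0:ℝ)..a, (y + m) / t * Real.exp (-(y + m) ^ 2 / (2 * t)))
      = Real.exp (-m ^ 2 / (2 * t)) - Real.exp (-(a + m) ^ 2 / (2 * t)) := by
  have key : ∀ y : ℝ, HasDerivAt (fun y : ℝ => -Real.exp (-(y + m) ^ 2 / (2 * t)))
      ((y + m) / t * Real.exp (-(y + m) ^ 2 / (2 * t))) y := by
    intro y
    have h0 : HasDerivAt (fun y : ℝ => -(y + m) ^ 2 / (2 * t)) (-(y + m) / t) y := by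
      have h1 : HasDerivAt (fun y : ℝ => y + m) 1 y := (hasDerivAt_id y).add_const m
      have h3 := ((h1.pow 2).neg).div_const (2 * t)
      refine h3.congr_deriv ?_
      field_simp
      ring
    have h4 := (h0.exp).neg
    refine h4.congr_deriv ?_
    ring
  have hcont : Continuous fun y : ℝ => (y + m) / t * Real.exp (-(y + m) ^ 2 / (2 * t)) := by
    continuity
  rw [intervalIntegral.integral_eq_sub_of_hasDerivAt (fun y _ => key y)
    (hcont.intervalIntegrable 0 a)]
  simp only [zero_add]
  ring

lemma integrand_eq (c w t y : ℝ) (ht : 0 < t) :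
    2 * y / Real.sqrt (2 * π * t ^ 3) * Real.exp (-(y + w * t) ^ 2 / (2 * t) - c * y)
      = Real.exp (((w + c) ^ 2 - w ^ 2) * t / 2) *
        (2 / Real.sqrt (2 * π * t) *
            ((y + (w + c) * t) / t * Real.exp (-(y + (w + c) * t) ^ 2 / (2 * t)))
          - 2 * (w + c) / Real.sqrt (2 * π * t) * Real.exp (-(y + (w + c) * t) ^ 2 / (2 * t))) := by
  have hs3 : Real.sqrt (2 * π * t ^ 3) = Real.sqrt (2 * π * t) * t := by
    rw [show 2 * π * t ^ 3 = 2 * π * t * t ^ 2 by ring, Real.sqrt_mul (by positivity),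
      Real.sqrt_sq ht.le]
  have hexp : Real.exp (-(y + w * t) ^ 2 / (2 * t) - c * y)
      = Real.exp (((w + c) ^ 2 - w ^ 2) * t / 2) * Real.exp (-(y + (w + c) * t) ^ 2 / (2 * t)) := by
    rw [← Real.exp_add]
    congr 1
    field_simp
    ring
  have hst : (0:ℝ) < Real.sqrt (2 * π * t) := Real.sqrt_pos.mpr (by positivity)
  rw [hs3, hexp]
  field_simp
  ring

lemma integral_eq (a c w t : ℝ) (ht : 0 < t) :
    (∫ y in (0:ℝ)..a,
        2 * y / Real.sqrt (2 * π * t ^ 3) * Real.exp (-(y + w * t) ^ 2 / (2 * t) - c * y))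
      = Real.exp (((w + c) ^ 2 - w ^ 2) * t / 2) *
          (2 / Real.sqrt (2 * π * t) *
            (Real.exp (-((w + c) * t) ^ 2 / (2 * t)) - Real.exp (-(a + (w + c) * t) ^ 2 / (2 * t)))
          - 2 * (w + c) / Real.sqrt (2 * π * t) *
            (Real.sqrt t * (Faux ((a + (w + c) * t) / Real.sqrt t)
              - Faux ((w + c) * t / Real.sqrt t)))) := by
  have hi1 : IntervalIntegrable
      (fun y : ℝ => 2 / Real.sqrt (2 * π * t) *
        ((y + (w + c) * t) / t * Real.exp (-(y + (w + c) * t) ^ 2 / (2 * t)))) volume 0 a := by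
    apply Continuous.intervalIntegrable; continuity
  have hi2 : IntervalIntegrable
      (fun y : ℝ => 2 * (w + c) / Real.sqrt (2 * π * t) *
        Real.exp (-(y + (w + c) * t) ^ 2 / (2 * t))) volume 0 a := by
    apply Continuous.intervalIntegrable; continuity
  rw [intervalIntegral.integral_congr (g := fun y : ℝ =>
      Real.exp (((w + c) ^ 2 - w ^ 2) * t / 2) *
        (2 / Real.sqrt (2 * π * t) *
            ((y + (w + c) * t) / t * Real.exp (-(y + (w + c) * t) ^ 2 / (2 * t)))
          - 2 * (w + c) / Real.sqrt (2 * π * t) * Real.exp (-(y + (w + c) * t) ^ 2 / (2 * t))))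
    (fun y _ => integrand_eq c w t y ht)]
  rw [intervalIntegral.integral_const_mul]
  rw [intervalIntegral.integral_sub hi1 hi2]
  rw [intervalIntegral.integral_const_mul, intervalIntegral.integral_const_mul]
  rw [sub2 a ((w + c) * t) t ht, sub1 a ((w + c) * t) t ht]

lemma E_tendsto (a d k : ℝ) (ha : 0 < a) :
    Tendsto (fun t : ℝ => Real.exp (d * t) * (2 / Real.sqrt (2 * π * t)) *
        Real.exp (-(a + k * t) ^ 2 / (2 * t))) (𝓝[>] 0) (𝓝 0) := by
  set δ : ℝ := min (a / (2 * |k| + 2)) 1 with hδdef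
  have hδpos : 0 < δ := lt_min (by positivity) one_pos
  have hbound : Tendsto (fun t : ℝ =>
      Real.exp |d| * (2 / Real.sqrt (2 * π)) * (256 / a ^ 4) * (t * Real.sqrt t))
      (𝓝[>] 0) (𝓝 0) := by
    have h1 : Tendsto (fun t : ℝ => t * Real.sqrt t) (𝓝 0) (𝓝 0) := by
      have := (continuous_id.mul Real.continuous_sqrt).tendsto 0
      simpa [Pi.mul_def] using this
    have h2 : Tendsto (fun t : ℝ => t * Real.sqrt t) (𝓝[>] (0:ℝ)) (𝓝 0) :=
      h1.mono_left nhdsWithin_le_nhds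
    simpa using h2.const_mul (Real.exp |d| * (2 / Real.sqrt (2 * π)) * (256 / a ^ 4))
  apply squeeze_zero' ?_ ?_ hbound
  · filter_upwards [self_mem_nhdsWithin] with t ht
    positivity
  · filter_upwards [Ioo_mem_nhdsGT_of_mem (Set.left_mem_Ico.mpr hδpos)] with t htt
    obtain ⟨ht, htδ⟩ := htt
    have hδ1 : δ ≤ 1 := min_le_right _ _
    have hδ2 : δ ≤ a / (2 * |k| + 2) := min_le_left _ _
    have hst : (0:ℝ) < Real.sqrt t := Real.sqrt_pos.mpr ht
    have hkt : |k| * t ≤ a / 2 := by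
      have h1 : |k| * t ≤ |k| * (a / (2 * |k| + 2)) :=
        mul_le_mul_of_nonneg_left (le_of_lt (lt_of_lt_of_le htδ hδ2)) (abs_nonneg k)
      have h2 : |k| * (a / (2 * |k| + 2)) ≤ a / 2 := by
        rw [mul_div_assoc', div_le_div_iff₀ (by positivity) (by norm_num : (0:ℝ) < 2)]
        nlinarith [abs_nonneg k]
      linarith
    have ha2 : a / 2 ≤ a + k * t := by
      have := neg_abs_le (k * t)
      have habs : |k * t| = |k| * t := by rw [abs_mul, abs_of_pos ht]
      nlinarith
    have hsq : a ^ 2 / 4 ≤ (a + k * t) ^ 2 := by nlinarith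
    have hgauss : Real.exp (-(a + k * t) ^ 2 / (2 * t)) ≤ 256 * t ^ 2 / a ^ 4 := by
      have h1 : Real.exp (-(a + k * t) ^ 2 / (2 * t)) ≤ Real.exp (-(a ^ 2 / (8 * t))) := by
        apply Real.exp_le_exp.mpr
        rw [show a ^ 2 / (8 * t) = a ^ 2 / 4 / (2 * t) by ring, neg_div, neg_le_neg_iff]
        gcongr
      have h2 : Real.exp (-(a ^ 2 / (8 * t))) ≤ 4 / (a ^ 2 / (8 * t)) ^ 2 :=
        exp_neg_le_aux (by positivity)
      have h3 : 4 / (a ^ 2 / (8 * t)) ^ 2 = 256 * t ^ 2 / a ^ 4 := by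
        field_simp
        ring
      linarith
    have hexp1 : Real.exp (d * t) ≤ Real.exp |d| := by
      apply Real.exp_le_exp.mpr
      have : d * t ≤ |d| * t := mul_le_mul_of_nonneg_right (le_abs_self d) ht.le
      nlinarith [abs_nonneg d, ht.le, htδ.le, hδ1]
    have key : Real.exp (d * t) * (2 / Real.sqrt (2 * π * t)) *
        Real.exp (-(a + k * t) ^ 2 / (2 * t))
        ≤ Real.exp |d| * (2 / Real.sqrt (2 * π * t)) * (256 * t ^ 2 / a ^ 4) := by
      have hspos : (0:ℝ) < Real.sqrt (2 * π * t) := Real.sqrt_pos.mpr (by positivity)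
      gcongr
    refine key.trans (le_of_eq ?_)
    rw [Real.sqrt_mul (by positivity : (0:ℝ) ≤ 2 * π) t,
      show t ^ 2 = t * Real.sqrt t * Real.sqrt t by
        rw [mul_assoc, Real.mul_self_sqrt ht.le]; ring]
    have h2pi : Real.sqrt (2 * π) ≠ 0 := by positivity
    field_simp
  

lemma sqrt_tendsto0 : Tendsto Real.sqrt (𝓝[>] (0:ℝ)) (𝓝 0) := by
  have := (Real.continuous_sqrt.tendsto 0)
  rw [Real.sqrt_zero] at this
  exact this.mono_left nhdsWithin_le_nhds

lemma sqrt_tendsto0' : Tendsto Real.sqrt (𝓝[>] (0:ℝ)) (𝓝[>] 0) := by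
  rw [tendsto_nhdsWithin_iff]
  refine ⟨sqrt_tendsto0, ?_⟩
  filter_upwards [self_mem_nhdsWithin] with t ht
  exact Real.sqrt_pos.mpr ht

lemma ksqrt_tendsto (k : ℝ) : Tendsto (fun t : ℝ => k * Real.sqrt t) (𝓝[>] 0) (𝓝 0) := by
  simpa using sqrt_tendsto0.const_mul k

lemma b_atTop (a k : ℝ) (ha : 0 < a) :
    Tendsto (fun t : ℝ => (a + k * t) / Real.sqrt t) (𝓝[>] 0) atTop := by
  have hinv : Tendsto (fun t : ℝ => (Real.sqrt t)⁻¹) (𝓝[>] 0) atTop :=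
    tendsto_inv_nhdsGT_zero.comp sqrt_tendsto0'
  have h1 : Tendsto (fun t : ℝ => a * (Real.sqrt t)⁻¹) (𝓝[>] 0) atTop :=
    hinv.const_mul_atTop ha
  have h3 : Tendsto (fun t : ℝ => a * (Real.sqrt t)⁻¹ + (-1)) (𝓝[>] 0) atTop :=
    tendsto_atTop_add_const_right _ (-1) h1
  apply tendsto_atTop_mono' _ _ h3
  filter_upwards [self_mem_nhdsWithin,
    (ksqrt_tendsto k).eventually (eventually_ge_nhds (by norm_num : (-1:ℝ) < 0))] with t ht hk
  have hst : (0:ℝ) < Real.sqrt t := Real.sqrt_pos.mpr ht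
  have h4 : Real.sqrt t * Real.sqrt t = t := Real.mul_self_sqrt (le_of_lt ht)
  have heq : (a + k * t) / Real.sqrt t = a * (Real.sqrt t)⁻¹ + k * Real.sqrt t := by
    field_simp
    linear_combination (-k) * h4
  rw [heq]
  linarith

lemma alpha_tendsto (k : ℝ) :
    Tendsto (fun t : ℝ => k * t / Real.sqrt t) (𝓝[>] 0) (𝓝 0) := by
  apply (ksqrt_tendsto k).congr'
  filter_upwards [self_mem_nhdsWithin] with t ht
  have hst : (0:ℝ) < Real.sqrt t := Real.sqrt_pos.mpr ht
  have h4 : Real.sqrt t * Real.sqrt t = t := Real.mul_self_sqrt (le_of_lt ht)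
  field_simp
  linear_combination k * h4

lemma D_tendsto (w : ℝ) :
    Tendsto (fun t : ℝ => 2 / Real.sqrt (2 * π * t) * (Real.exp (-(w ^ 2 * t) / 2) - 1))
      (𝓝[>] 0) (𝓝 0) := by
  have hd : HasDerivAt (fun t : ℝ => Real.exp (-(w ^ 2 * t) / 2)) (-(w ^ 2 / 2)) 0 := by
    have h1 : HasDerivAt (fun t : ℝ => -(w ^ 2 * t) / 2) (-(w ^ 2 / 2)) 0 := by
      have h0 := (((hasDerivAt_id (0:ℝ)).const_mul (w ^ 2)).neg).div_const 2
      refine h0.congr_deriv ?_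
      ring
    have h2 := h1.exp
    simpa using h2
  have hslope : Tendsto (fun t : ℝ => (Real.exp (-(w ^ 2 * t) / 2) - 1) / t)
      (𝓝[≠] (0:ℝ)) (𝓝 (-(w ^ 2 / 2))) := by
    have := hasDerivAt_iff_tendsto_slope.mp hd
    refine this.congr fun t => ?_
    simp [slope_def_field]
  have hslope' : Tendsto (fun t : ℝ => (Real.exp (-(w ^ 2 * t) / 2) - 1) / t)
      (𝓝[>] (0:ℝ)) (𝓝 (-(w ^ 2 / 2))) :=
    hslope.mono_left (nhdsWithin_mono _ fun x hx => ne_of_gt hx)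
  have hmain : Tendsto (fun t : ℝ =>
      2 / Real.sqrt (2 * π) * (Real.sqrt t * ((Real.exp (-(w ^ 2 * t) / 2) - 1) / t)))
      (𝓝[>] 0) (𝓝 0) := by
    have := (sqrt_tendsto0.mul hslope').const_mul (2 / Real.sqrt (2 * π))
    simpa using this
  apply hmain.congr'
  filter_upwards [self_mem_nhdsWithin] with t ht
  have hst : (0:ℝ) < Real.sqrt t := Real.sqrt_pos.mpr ht
  rw [Real.sqrt_mul (by positivity : (0:ℝ) ≤ 2 * π) t]
  have h4 : Real.sqrt t * Real.sqrt t = t := Real.mul_self_sqrt ht.le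
  have h2pi : Real.sqrt (2 * π) ≠ 0 := by positivity
  have ht' : t ≠ 0 := ne_of_gt ht
  generalize Real.exp (-(w ^ 2 * t) / 2) - 1 = X
  field_simp
  linear_combination X * h4

theorem stmt_1 (a c w : ℝ) (ha : 0 < a) :
    Tendsto (fun t : ℝ =>
        (∫ y in (0:ℝ)..a,
            (2 * y / Real.sqrt (2 * π * t ^ 3)) * Real.exp (-(y + w * t) ^ 2 / (2 * t) - c * y))
          - 2 / Real.sqrt (2 * π * t))
      (nhdsWithin 0 (Set.Ioi 0)) (nhds (-(w + c))) := by
  set k : ℝ := w + c with hk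
  set d : ℝ := ((w + c) ^ 2 - w ^ 2) / 2 with hd
  have hD := D_tendsto w
  have hE := E_tendsto a d k ha
  -- G tendsto
  have hKt : Tendsto (fun t : ℝ => Real.exp (d * t)) (𝓝[>] (0:ℝ)) (𝓝 1) := by
    have hcont : Continuous fun t : ℝ => Real.exp (d * t) := by continuity
    have := hcont.tendsto 0
    simp only [mul_zero, Real.exp_zero] at this
    exact this.mono_left nhdsWithin_le_nhds
  have hFb : Tendsto (fun t : ℝ => Faux ((a + k * t) / Real.sqrt t)) (𝓝[>] (0:ℝ))
      (𝓝 (Real.sqrt (2 * π) / 2)) :=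
    Faux_atTop.comp (b_atTop a k ha)
  have hFa : Tendsto (fun t : ℝ => Faux (k * t / Real.sqrt t)) (𝓝[>] (0:ℝ)) (𝓝 0) := by
    have := (Faux_continuous.tendsto 0).comp (alpha_tendsto k)
    rwa [Faux_zero] at this
  have hG : Tendsto (fun t : ℝ => Real.exp (d * t) * (2 * k / Real.sqrt (2 * π) *
      (Faux ((a + k * t) / Real.sqrt t) - Faux (k * t / Real.sqrt t)))) (𝓝[>] (0:ℝ))
      (𝓝 (1 * (2 * k / Real.sqrt (2 * π) * (Real.sqrt (2 * π) / 2 - 0)))) :=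
    hKt.mul ((hFb.sub hFa).const_mul (2 * k / Real.sqrt (2 * π)))
  have hval : (1 : ℝ) * (2 * k / Real.sqrt (2 * π) * (Real.sqrt (2 * π) / 2 - 0)) = k := by
    have h2pi : Real.sqrt (2 * π) ≠ 0 := by positivity
    field_simp
    ring
  rw [hval] at hG
  have hcomb := (hD.sub hE).sub hG
  rw [show (0:ℝ) - 0 - k = -(w + c) by rw [hk]; ring] at hcomb
  apply hcomb.congr'
  filter_upwards [self_mem_nhdsWithin] with t ht
  have ht0 : (0:ℝ) < t := ht
  rw [integral_eq a c w t ht0]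
  have hKeq : Real.exp (((w + c) ^ 2 - w ^ 2) * t / 2) = Real.exp (d * t) := by
    congr 1
    rw [hd]; ring
  have hcombine : Real.exp (d * t) * Real.exp (-((w + c) * t) ^ 2 / (2 * t))
      = Real.exp (-(w ^ 2 * t) / 2) := by
    rw [← Real.exp_add]
    congr 1
    rw [hd]
    field_simp
    ring
  rw [hKeq, ← hcombine, ← hk]
  have hst : (0:ℝ) < Real.sqrt t := Real.sqrt_pos.mpr ht0
  have h2pi : Real.sqrt (2 * π) ≠ 0 := by positivity
  rw [Real.sqrt_mul (by positivity : (0:ℝ) ≤ 2 * π) t]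
  field_simp
  ring
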